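/- The function (e, τ) ↦ −τ·log(Σ_{j≠i} aⱼ·eⱼ/τ + c), with aⱼ ≥ 0 and c > 0, is jointly convex in (e, τ) on the domain eⱼ ≥ 0, τ > 0. -/

import Mathlib

open BigOperators

lemma key_persp (τ₁ τ₂ u₁ u₂ s t : ℝ) (hτ₁ : 0 < τ₁) (hτ₂ : 0 < τ₂)
    (hu₁ : 0 < u₁) (hu₂ : 0 < u₂) (hs : 0 ≤ s) (ht : 0 ≤ t) (hst : s + t = 1) :
    s * (τ₁ * Real.log (u₁ / τ₁)) + t * (τ₂ * Real.log (u₂ / τ₂)) ≤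
      (s * τ₁ + t * τ₂) * Real.log ((s * u₁ + t * u₂) / (s * τ₁ + t * τ₂)) := by
  have hT : 0 < s * τ₁ + t * τ₂ := by
    rcases hs.lt_or_eq with h | h
    · exact add_pos_of_pos_of_nonneg (mul_pos h hτ₁) (mul_nonneg ht hτ₂.le)
    · have ht1 : t = 1 := by linarith
      subst ht1; simp [← h]; positivity
  set T := s * τ₁ + t * τ₂ with hTdef
  have hl₁ : 0 ≤ s * τ₁ / T := by positivity
  have hl₂ : 0 ≤ t * τ₂ / T := by positivity
  have hlsum : s * τ₁ / T + t * τ₂ / T = 1 := by rw [← add_div, div_self hT.ne']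
  have h := strictConcaveOn_log_Ioi.concaveOn.2 (Set.mem_Ioi.2 (div_pos hu₁ hτ₁))
    (Set.mem_Ioi.2 (div_pos hu₂ hτ₂)) hl₁ hl₂ hlsum
  simp only [smul_eq_mul] at h
  have hx : s * τ₁ / T * (u₁ / τ₁) + t * τ₂ / T * (u₂ / τ₂) = (s * u₁ + t * u₂) / T := by
    field_simp
  rw [hx] at h
  have h2 := mul_le_mul_of_nonneg_left h hT.le
  calc s * (τ₁ * Real.log (u₁ / τ₁)) + t * (τ₂ * Real.log (u₂ / τ₂))
      = T * (s * τ₁ / T * Real.log (u₁ / τ₁) + t * τ₂ / T * Real.log (u₂ / τ₂)) := by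
        field_simp
    _ ≤ T * Real.log ((s * u₁ + t * u₂) / T) := h2

/-- The function `(e, τ) ↦ -τ * log (∑_{j ≠ i} aⱼ eⱼ / τ + c)` with `aⱼ ≥ 0`, `c > 0`
is jointly convex on `{(e, τ) : e ≥ 0, τ > 0}`. -/
theorem stmt_9 (K : ℕ) (i : Fin K) (a : Fin K → ℝ) (ha : ∀ j, 0 ≤ a j)
    (c : ℝ) (hc : 0 < c) :
    ConvexOn ℝ {p : (Fin K → ℝ) × ℝ | (∀ j, 0 ≤ p.1 j) ∧ 0 < p.2}
      (fun p => -(p.2 * Real.log (∑ j ∈ Finset.univ.erase i, a j * p.1 j / p.2 + c))) := by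
  constructor
  · intro p hp q hq s t hs ht hst
    refine ⟨fun j => add_nonneg (mul_nonneg hs (hp.1 j)) (mul_nonneg ht (hq.1 j)), ?_⟩
    rcases hs.lt_or_eq with h | h
    · exact add_pos_of_pos_of_nonneg (mul_pos h hp.2) (mul_nonneg ht hq.2.le)
    · have ht1 : t = 1 := by linarith
      subst ht1; simpa [← h] using hq.2
  · intro p hp q hq s t hs ht hst
    obtain ⟨hp1, hp2⟩ := hp
    obtain ⟨hq1, hq2⟩ := hq
    set A₁ := ∑ j ∈ Finset.univ.erase i, a j * p.1 j with hA₁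
    set A₂ := ∑ j ∈ Finset.univ.erase i, a j * q.1 j with hA₂
    have hA₁0 : 0 ≤ A₁ := Finset.sum_nonneg fun j _ => mul_nonneg (ha j) (hp1 j)
    have hA₂0 : 0 ≤ A₂ := Finset.sum_nonneg fun j _ => mul_nonneg (ha j) (hq1 j)
    have hu₁ : 0 < A₁ + c * p.2 := by positivity
    have hu₂ : 0 < A₂ + c * q.2 := by positivity
    have hT : 0 < s * p.2 + t * q.2 := by
      rcases hs.lt_or_eq with h | h
      · exact add_pos_of_pos_of_nonneg (mul_pos h hp2) (mul_nonneg ht hq2.le)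
      · have ht1 : t = 1 := by linarith
        subst ht1; simpa [← h] using hq2
    have hsum1 : ∑ j ∈ Finset.univ.erase i, a j * p.1 j / p.2 + c = (A₁ + c * p.2) / p.2 := by
      rw [← Finset.sum_div, add_div, mul_div_assoc, div_self (ne_of_gt hp2), mul_one]
    have hsum2 : ∑ j ∈ Finset.univ.erase i, a j * q.1 j / q.2 + c = (A₂ + c * q.2) / q.2 := by
      rw [← Finset.sum_div, add_div, mul_div_assoc, div_self (ne_of_gt hq2), mul_one]
    have hsum3 : ∑ j ∈ Finset.univ.erase i, a j * (s • p.1 + t • q.1) j / (s * p.2 + t * q.2) + c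
        = (s * (A₁ + c * p.2) + t * (A₂ + c * q.2)) / (s * p.2 + t * q.2) := by
      rw [← Finset.sum_div]
      rw [div_add' _ _ _ (ne_of_gt hT), div_eq_div_iff (ne_of_gt hT) (ne_of_gt hT)]
      have : ∑ j ∈ Finset.univ.erase i, a j * (s • p.1 + t • q.1) j
          = s * A₁ + t * A₂ := by
        simp only [Pi.add_apply, Pi.smul_apply, smul_eq_mul, hA₁, hA₂,
          Finset.mul_sum]
        rw [← Finset.sum_add_distrib]
        exact Finset.sum_congr rfl fun j _ => by ring
      rw [this]; ring
    have key := key_persp p.2 q.2 (A₁ + c * p.2) (A₂ + c * q.2) s t hp2 hq2 hu₁ hu₂ hs ht hst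
    simp only [smul_eq_mul, Prod.smul_fst, Prod.smul_snd, Prod.fst_add, Prod.snd_add]
    rw [hsum3]
    rw [hsum1, hsum2] at *
    linarith [key]
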